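/- With w, λ = λ(w), p = p(w), α = α(w) as above, we have α_k = λ_k - k + 1 for 1 ≤ k ≤ p, and in Frobenius notation: λ = (α_1 - 1, …, α_p - 1 | α_1, …, α_p) and the partition (λ_1+1, …, λ_p+1, λ_{p+2}, …, λ_n) equals (α_1, …, α_p | α_1 - 1, …, α_p - 1). -/

import Mathlib

open Finset

def Wcond (n : ℕ) (w : Equiv.Perm (Fin (2*n))) : Prop :=
  ∀ i : Fin (2*n), ((w i : ℕ) + 1) + ((w i.rev : ℕ) + 1) = 2*n + 1

def Wpar (n : ℕ) (w : Equiv.Perm (Fin (2*n))) : Prop :=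
  Even ((Finset.univ.filter (fun i : Fin (2*n) => (i : ℕ) < n ∧ n ≤ (w i : ℕ))).card)

noncomputable def jjf (n : ℕ) (w : Equiv.Perm (Fin (2*n))) (k : ℕ) : ℕ :=
  ((((Finset.univ.filter (fun i : Fin (2*n) => (i : ℕ) < n)).image w).sort (· ≤ ·)).map
    (fun x => (x : ℕ) + 1)).getD (k-1) 0

noncomputable def lamf (n : ℕ) (w : Equiv.Perm (Fin (2*n))) (k : ℕ) : ℤ :=
  if jjf n w (n+1-k) ≤ n then (jjf n w (n+1-k) : ℤ) - ((n+1-k : ℕ) : ℤ)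
  else (jjf n w (n+1-k) : ℤ) - ((n+1-k : ℕ) : ℤ) - 1

noncomputable def pval (n : ℕ) (w : Equiv.Perm (Fin (2*n))) : ℕ :=
  ((Finset.Icc 1 n).filter (fun k => n+2 ≤ jjf n w k)).card

noncomputable def lamconj (n : ℕ) (w : Equiv.Perm (Fin (2*n))) (k : ℕ) : ℤ :=
  (((Finset.Icc 1 n).filter (fun i => (k:ℤ) ≤ lamf n w i)).card : ℤ)

noncomputable def alphaf (n : ℕ) (w : Equiv.Perm (Fin (2*n))) (k : ℕ) : ℤ :=
  (jjf n w (n+1-k) : ℤ) - ((n : ℤ) + 1)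

noncomputable def muf (n : ℕ) (w : Equiv.Perm (Fin (2*n))) (k : ℕ) : ℤ :=
  if k ≤ pval n w then lamf n w k + 1 else if k + 1 ≤ n then lamf n w (k+1) else 0

noncomputable def muconj (n : ℕ) (w : Equiv.Perm (Fin (2*n))) (k : ℕ) : ℤ :=
  (((Finset.Icc 1 n).filter (fun i => (k:ℤ) ≤ muf n w i)).card : ℤ)

namespace St11

variable (n : ℕ) (w : Equiv.Perm (Fin (2*n)))

noncomputable def LL : List ℕ :=
  ((((Finset.univ.filter (fun i : Fin (2*n) => (i : ℕ) < n)).image w).sort (· ≤ ·)).map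
    (fun x => (x : ℕ) + 1))

lemma LL_eq : LL n w = List.map (fun x : Fin (2*n) => (x : ℕ) + 1)
    (((Finset.univ.filter (fun i : Fin (2*n) => (i : ℕ) < n)).image w).sort (· ≤ ·)) := by
  simp only [LL, List.map_eq_map, bind_pure_comp, List.map_map]
  rfl

def SS : Finset ℕ :=
  (Finset.univ.filter (fun i : Fin (2*n) => (i : ℕ) < n)).image (fun i => ((w i : ℕ) + 1))

def NN (c : ℕ) : ℕ := ((SS n w).filter (fun t => c ≤ t)).card

lemma jjf_eq (k : ℕ) : jjf n w k = (LL n w).getD (k-1) 0 := rfl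

lemma length_LL : (LL n w).length = n := by
  rw [LL_eq, List.length_map, Finset.length_sort,
    Finset.card_image_of_injective _ w.injective]
  rw [Finset.card_bij (fun (a : Fin (2*n)) _ => (a : ℕ)) ?_ ?_ ?_, Finset.card_range n]
  · intro a ha; simp only [Finset.mem_filter] at ha; simpa using ha.2
  · intro a _ b _ h; exact Fin.val_injective h
  · intro b hb
    simp only [Finset.mem_range] at hb
    exact ⟨⟨b, by omega⟩, by simp [hb], rfl⟩

lemma sorted_LL : (LL n w).Pairwise (· < ·) := by
  rw [LL_eq]
  exact List.Pairwise.map _ (fun a b (h : a < b) => by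
    simpa [Nat.add_lt_add_iff_right] using (Fin.lt_iff_val_lt_val.mp h)) (Finset.sortedLT_sort _).pairwise

lemma mem_LL {a : ℕ} : a ∈ LL n w ↔ a ∈ SS n w := by
  simp only [LL_eq, SS, List.mem_map, Finset.mem_sort, Finset.mem_image]
  constructor
  · rintro ⟨x, ⟨i, hi, rfl⟩, rfl⟩
    exact ⟨i, hi, rfl⟩
  · rintro ⟨i, hi, rfl⟩
    exact ⟨w i, ⟨i, hi, rfl⟩, rfl⟩

end St11

namespace St11
variable (n : ℕ) (w : Equiv.Perm (Fin (2*n)))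

lemma jjf_get {k : ℕ} (h1 : 1 ≤ k) (h2 : k ≤ n) :
    jjf n w k = (LL n w).get ⟨k-1, by rw [length_LL]; omega⟩ := by
  rw [jjf_eq]; exact List.getD_eq_get (l := LL n w) (d := 0) (i := ⟨k-1, by rw [length_LL]; omega⟩)

lemma jjf_mem {k : ℕ} (h1 : 1 ≤ k) (h2 : k ≤ n) : jjf n w k ∈ SS n w := by
  rw [jjf_get n w h1 h2, ← mem_LL]
  exact List.get_mem _ _

lemma jjf_lt {k k' : ℕ} (h1 : 1 ≤ k) (h2 : k < k') (h3 : k' ≤ n) :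
    jjf n w k < jjf n w k' := by
  rw [jjf_get n w h1 (by omega), jjf_get n w (by omega) h3]
  exact (sorted_LL n w).rel_get_of_lt (by simp [Fin.lt_iff_val_lt_val]; omega)

lemma jjf_le {k k' : ℕ} (h1 : 1 ≤ k) (h2 : k ≤ k') (h3 : k' ≤ n) :
    jjf n w k ≤ jjf n w k' := by
  rcases eq_or_lt_of_le h2 with rfl | h
  · exact le_rfl
  · exact (jjf_lt n w h1 h h3).le

lemma jjf_gap {k k' : ℕ} (h1 : 1 ≤ k) (h2 : k ≤ k') (h3 : k' ≤ n) :
    jjf n w k + (k' - k) ≤ jjf n w k' := by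
  induction k' with
  | zero => omega
  | succ m ih =>
    rcases eq_or_lt_of_le h2 with rfl | h
    · simp
    · have hm : k ≤ m := by omega
      have h4 := ih hm (by omega)
      have h5 := jjf_lt n w (h1.trans hm) (by omega : m < m + 1) h3
      omega

lemma countP_eq (P : ℕ → Prop) [DecidablePred P] :
    ((Finset.Icc 1 n).filter (fun m => P (jjf n w m))).card = ((SS n w).filter P).card := by
  apply Finset.card_bij (fun m _ => jjf n w m)
  · intro m hm
    simp only [Finset.mem_filter, Finset.mem_Icc] at hm ⊢
    exact ⟨jjf_mem n w hm.1.1 hm.1.2, hm.2⟩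
  · intro m hm m' hm' h
    simp only [Finset.mem_filter, Finset.mem_Icc] at hm hm'
    by_contra hne
    rcases Nat.lt_or_ge m m' with hlt | hge
    · exact absurd h (jjf_lt n w hm.1.1 hlt hm'.1.2).ne
    · exact absurd h.symm (jjf_lt n w hm'.1.1 (by omega) hm.1.2).ne
  · intro t ht
    simp only [Finset.mem_filter] at ht
    obtain ⟨idx, hidx⟩ := List.mem_iff_get.mp ((mem_LL n w).mpr ht.1)
    have hlen : (LL n w).length = n := length_LL n w
    have hidx2 : idx.val < n := by have := idx.isLt; omega
    have hj : jjf n w (idx.val + 1) = t := by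
      rw [jjf_get n w (by omega) (by omega), ← hidx]
      congr 1
    exact ⟨idx.val + 1, by
      simp only [Finset.mem_filter, Finset.mem_Icc]
      exact ⟨⟨by omega, by omega⟩, hj ▸ ht.2⟩, hj⟩

lemma card_SS : (SS n w).card = n := by
  have h := length_LL n w
  rw [LL_eq, List.length_map, Finset.length_sort,
    Finset.card_image_of_injective _ w.injective] at h
  rw [SS, Finset.card_image_of_injective _
    (fun a b hab => w.injective (Fin.val_injective (by omega : (w a : ℕ) = w b))), h]

lemma SS_range {a : ℕ} (ha : a ∈ SS n w) : 1 ≤ a ∧ a ≤ 2*n := by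
  simp only [SS, Finset.mem_image] at ha
  obtain ⟨i, _, rfl⟩ := ha
  have := (w i).isLt
  omega

lemma NN_le : ∀ c, NN n w c ≤ n := by
  intro c
  exact le_trans (Finset.card_filter_le _ _) (le_of_eq (card_SS n w))

variable (hw : Wcond n w)

lemma mem_SS_iff {a : ℕ} : a ∈ SS n w ↔ ∃ i : Fin (2*n), (i : ℕ) < n ∧ (w i : ℕ) + 1 = a := by
  simp only [SS, Finset.mem_image, Finset.mem_filter, Finset.mem_univ, true_and]

include hw in
lemma symm_SS {m : ℕ} (h1 : 1 ≤ m) (h2 : m ≤ 2*n) :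
    m ∈ SS n w ↔ ¬ (2*n+1-m ∈ SS n w) := by
  constructor
  · rintro hm hm'
    obtain ⟨i, hi, hwi⟩ := (mem_SS_iff n w).mp hm
    obtain ⟨i', hi', hwi'⟩ := (mem_SS_iff n w).mp hm'
    have hrev := hw i
    have hrevval : (i.rev : ℕ) = 2*n - 1 - (i : ℕ) := by
      simp [Fin.val_rev]; omega
    have : (w i.rev : ℕ) = (w i' : ℕ) := by omega
    have heq : i.rev = i' := w.injective (Fin.val_injective this)
    have : (i.rev : ℕ) = (i' : ℕ) := by rw [heq]
    omega
  · intro hm'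
    set j : Fin (2*n) := w.symm ⟨m - 1, by omega⟩ with hj
    have hwj : (w j : ℕ) = m - 1 := by
      rw [hj, Equiv.apply_symm_apply]
    by_cases hjn : (j : ℕ) < n
    · exact (mem_SS_iff n w).mpr ⟨j, hjn, by omega⟩
    · exfalso
      apply hm'
      have hrev := hw j.rev
      have hrr : j.rev.rev = j := Fin.rev_rev j
      have hrevval : (j.rev : ℕ) = 2*n - 1 - (j : ℕ) := by
        simp [Fin.val_rev]; omega
      have hjlt := j.isLt
      refine (mem_SS_iff n w).mpr ⟨j.rev, by omega, ?_⟩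
      rw [hrr] at hrev
      omega

include hw in
lemma reflection {c : ℕ} (h1 : 1 ≤ c) (h2 : c ≤ 2*n+1) :
    NN n w c + n + c = 2*n+1 + NN n w (2*n+2-c) := by
  classical
  set U : Finset ℕ := Finset.Icc 1 (2*n) with hU
  have hsplit : ((U.filter (fun t => c ≤ t ∧ t ∈ SS n w)).card : ℕ)
      + (U.filter (fun t => c ≤ t ∧ t ∉ SS n w)).card = 2*n+1-c := by
    have h3 : (U.filter (fun t => c ≤ t)).card = 2*n+1-c := by
      have : U.filter (fun t => c ≤ t) = Finset.Icc c (2*n) := by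
        ext t
        simp only [hU, Finset.mem_filter, Finset.mem_Icc]
        omega
      rw [this, Nat.card_Icc]
    rw [← h3]
    rw [← Finset.filter_filter, ← Finset.filter_filter]
    exact Finset.card_filter_add_card_filter_not (fun t => t ∈ SS n w)
  have hA : (U.filter (fun t => c ≤ t ∧ t ∈ SS n w)).card = NN n w c := by
    rw [NN]
    congr 1
    ext t
    simp only [hU, Finset.mem_filter, Finset.mem_Icc]
    constructor
    · rintro ⟨_, h, hs⟩; exact ⟨hs, h⟩
    · rintro ⟨hs, h⟩; exact ⟨(SS_range n w hs).imp id id, h, hs⟩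
  have hB : (U.filter (fun t => c ≤ t ∧ t ∉ SS n w)).card
      = ((SS n w).filter (fun t => t ≤ 2*n+1-c)).card := by
    apply Finset.card_bij (fun t _ => 2*n+1-t)
    · intro t ht
      simp only [hU, Finset.mem_filter, Finset.mem_Icc] at ht ⊢
      obtain ⟨⟨ht1, ht2⟩, htc, hts⟩ := ht
      have hmem : 2*n+1-t ∈ SS n w := by
        by_contra hcon
        exact hts ((symm_SS n w hw (by omega) (by omega)).mpr hcon)
      exact ⟨hmem, by omega⟩
    · intro t ht t' ht' hh
      simp only [hU, Finset.mem_filter, Finset.mem_Icc] at ht ht'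
      omega
    · intro s hs
      simp only [Finset.mem_filter] at hs
      obtain ⟨hs1, hs2⟩ := hs
      obtain ⟨hsl, hsu⟩ := SS_range n w hs1
      refine ⟨2*n+1-s, ?_, by omega⟩
      simp only [hU, Finset.mem_filter, Finset.mem_Icc]
      refine ⟨⟨by omega, by omega⟩, by omega, ?_⟩
      intro hcon
      have := (symm_SS n w hw (by omega : 1 ≤ 2*n+1-s) (by omega)).mp hcon
      have h5 : 2*n+1-(2*n+1-s) = s := by omega
      rw [h5] at this
      exact this hs1
  have hC : ((SS n w).filter (fun t => t ≤ 2*n+1-c)).card + NN n w (2*n+2-c) = n := by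
    have h8 := Finset.card_filter_add_card_filter_not
      (s := SS n w) (p := fun t => 2*n+2-c ≤ t)
    have h9 : (SS n w).filter (fun t => t ≤ 2*n+1-c)
        = (SS n w).filter (fun t => ¬ (2*n+2-c ≤ t)) := by
      apply Finset.filter_congr
      intro t ht
      have := SS_range n w ht
      constructor <;> intros <;> omega
    rw [h9, NN]
    rw [card_SS n w] at h8
    omega
  omega

lemma thresh {k c : ℕ} (h1 : 1 ≤ k) (h2 : k ≤ n) :
    c ≤ jjf n w (n+1-k) ↔ k ≤ NN n w c := by
  have hcount := countP_eq n w (fun t => c ≤ t)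
  constructor
  · intro h
    rw [NN, ← hcount]
    calc k = (Finset.Icc (n+1-k) n).card := by rw [Nat.card_Icc]; omega
    _ ≤ _ := by
        apply Finset.card_le_card
        intro m hm
        simp only [Finset.mem_Icc] at hm
        simp only [Finset.mem_filter, Finset.mem_Icc]
        exact ⟨⟨by omega, hm.2⟩, le_trans h (jjf_le n w (by omega) hm.1 hm.2)⟩
  · intro h
    by_contra hcon
    push_neg at hcon
    have hsub : (Finset.Icc 1 n).filter (fun m => c ≤ jjf n w m) ⊆ Finset.Icc (n+2-k) n := by
      intro m hm
      simp only [Finset.mem_filter, Finset.mem_Icc] at hm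
      simp only [Finset.mem_Icc]
      refine ⟨?_, hm.1.2⟩
      by_contra hcon2
      push_neg at hcon2
      have : jjf n w m ≤ jjf n w (n+1-k) := jjf_le n w hm.1.1 (by omega) (by omega)
      omega
    have := Finset.card_le_card hsub
    rw [hcount, Nat.card_Icc] at this
    rw [NN] at h
    omega

lemma NN_succ_jjf {m : ℕ} (h1 : 1 ≤ m) (h2 : m ≤ n) :
    NN n w (jjf n w m + 1) = n - m := by
  have hcount := countP_eq n w (fun t => jjf n w m + 1 ≤ t)
  rw [NN, ← hcount]
  have : (Finset.Icc 1 n).filter (fun m' => jjf n w m + 1 ≤ jjf n w m')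
      = Finset.Icc (m+1) n := by
    ext m'
    simp only [Finset.mem_filter, Finset.mem_Icc]
    constructor
    · rintro ⟨⟨hm1, hm2⟩, hle⟩
      refine ⟨?_, hm2⟩
      by_contra hcon
      push_neg at hcon
      have : jjf n w m' ≤ jjf n w m := jjf_le n w hm1 (by omega) h2
      omega
    · rintro ⟨hm1, hm2⟩
      exact ⟨⟨by omega, hm2⟩, jjf_lt n w h1 (by omega) hm2⟩
  rw [this, Nat.card_Icc]
  omega

include hw in
lemma NN_n (hn : 1 ≤ n) : NN n w n = NN n w (n+2) + 1 := by
  classical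
  have h8 := Finset.card_filter_add_card_filter_not
    (s := (SS n w).filter (fun t => n ≤ t)) (p := fun t => n+2 ≤ t)
  rw [Finset.filter_filter, Finset.filter_filter] at h8
  have e1 : (SS n w).filter (fun t => n ≤ t ∧ n+2 ≤ t) = (SS n w).filter (fun t => n+2 ≤ t) := by
    apply Finset.filter_congr
    intro t _
    constructor
    · rintro ⟨_, h⟩; exact h
    · intro h; exact ⟨by omega, h⟩
  have e2 : (SS n w).filter (fun t => n ≤ t ∧ ¬ (n+2 ≤ t)) = if n ∈ SS n w then {n} else {n+1} := by
    have hone := symm_SS n w hw (m := n) hn (by omega)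
    have h2n1 : 2*n+1-n = n+1 := by omega
    rw [h2n1] at hone
    by_cases hns : n ∈ SS n w
    · rw [if_pos hns]
      ext t
      simp only [Finset.mem_filter, Finset.mem_singleton]
      constructor
      · rintro ⟨hts, htn, htn2⟩
        have : t = n ∨ t = n+1 := by omega
        rcases this with rfl | rfl
        · rfl
        · exact absurd hts (hone.mp hns)
      · rintro rfl; exact ⟨hns, le_rfl, by omega⟩
    · rw [if_neg hns]
      have hn1 : n+1 ∈ SS n w := by
        by_contra hcon
        exact hns (hone.mpr hcon)
      ext t
      simp only [Finset.mem_filter, Finset.mem_singleton]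
      constructor
      · rintro ⟨hts, htn, htn2⟩
        have : t = n ∨ t = n+1 := by omega
        rcases this with rfl | rfl
        · exact absurd hts hns
        · rfl
      · rintro rfl; exact ⟨hn1, by omega, by omega⟩
  rw [e1, e2] at h8
  rw [NN, NN]
  by_cases hns : n ∈ SS n w
  · rw [if_pos hns] at h8; simp at h8; omega
  · rw [if_neg hns] at h8; simp at h8; omega

variable (hw2 : True)

lemma pval_eq : pval n w = NN n w (n+2) := by
  rw [pval, NN]
  exact countP_eq n w (fun t => n+2 ≤ t)

include hw in
lemma p_le (hn : 1 ≤ n) : pval n w + 1 ≤ n := by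
  have h1 := NN_n n w hw hn
  have h2 := NN_le n w n
  rw [pval_eq]
  omega

include hw in
lemma a_ge (hn : 1 ≤ n) {k : ℕ} (hk1 : 1 ≤ k) (hkp : k ≤ pval n w) :
    n + 2 ≤ jjf n w (n+1-k) := by
  have hple := p_le n w hw hn
  refine (thresh n w hk1 (by omega)).mpr ?_
  rw [← pval_eq]
  exact hkp

lemma a_le2n (hn : 1 ≤ n) {k : ℕ} (hk1 : 1 ≤ k) (hkn : k ≤ n) :
    jjf n w (n+1-k) ≤ 2*n :=
  (SS_range n w (jjf_mem n w (k := n+1-k) (by omega) (by omega))).2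

include hw in
lemma NN_refl (hn : 1 ≤ n) {k : ℕ} (hk1 : 1 ≤ k) (hkp : k ≤ pval n w) :
    NN n w (2*n+1 - jjf n w (n+1-k)) + (n+1) = jjf n w (n+1-k) + k := by
  have hple := p_le n w hw hn
  have ha := a_ge n w hw hn hk1 hkp
  have ha2 := a_le2n n w hn hk1 (by omega)
  have hNa : NN n w (jjf n w (n+1-k) + 1) = n - (n+1-k) :=
    NN_succ_jjf n w (m := n+1-k) (by omega) (by omega)
  have href := reflection n w hw (c := 2*n+1 - jjf n w (n+1-k)) (by omega) (by omega)
  have hidx : 2*n+2 - (2*n+1 - jjf n w (n+1-k)) = jjf n w (n+1-k) + 1 := by omega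
  rw [hidx] at href
  omega

include hw in
lemma jjf_nk_ge (hn : 1 ≤ n) {k : ℕ} (hk1 : 1 ≤ k) (hkp : k ≤ pval n w) :
    n ≤ jjf n w (n-k) := by
  have hple := p_le n w hw hn
  have h1 : n ≤ jjf n w (n+1-(k+1)) := by
    refine (thresh n w (by omega) (by omega)).mpr ?_
    rw [NN_n n w hw hn, ← pval_eq]
    omega
  have : n+1-(k+1) = n-k := by omega
  rwa [this] at h1

include hw in
lemma lamf_iff (hn : 1 ≤ n) {k : ℕ} (hk1 : 1 ≤ k) (hkp : k ≤ pval n w)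
    {i : ℕ} (hi1 : 1 ≤ i) (hin : i ≤ n) :
    ((k:ℤ) ≤ lamf n w i ↔ 2*n+1 ≤ jjf n w (n+1-i) + jjf n w (n+1-k)) := by
  have hple := p_le n w hw hn
  have ha := a_ge n w hw hn hk1 hkp
  have ha2 := a_le2n n w hn hk1 (by omega)
  have hbm := jjf_mem n w (k := n+1-i) (by omega) (by omega)
  obtain ⟨hb1, hb2⟩ := SS_range n w hbm
  have hNb : NN n w (jjf n w (n+1-i) + 1) = n - (n+1-i) :=
    NN_succ_jjf n w (m := n+1-i) (by omega) (by omega)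
  have href := reflection n w hw (c := 2*n+1 - jjf n w (n+1-i)) (by omega) (by omega)
  have hidx : 2*n+2 - (2*n+1 - jjf n w (n+1-i)) = jjf n w (n+1-i) + 1 := by omega
  rw [hidx] at href
  -- href with hNb : NN (2n+1-b) + (n+1-i) = b
  rw [lamf]
  by_cases hb : jjf n w (n+1-i) ≤ n
  · rw [if_pos hb]
    have hth := thresh n w hk1 (by omega) (c := 2*n+1 - jjf n w (n+1-i))
    constructor
    · intro hle
      have hk' : k ≤ NN n w (2*n+1 - jjf n w (n+1-i)) := by omega
      have := hth.mpr hk'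
      omega
    · intro h
      have := hth.mp (by omega)
      omega
  · rw [if_neg hb]
    refine ⟨fun _ => by omega, fun _ => ?_⟩
    have hnk := jjf_nk_ge n w hw hn hk1 hkp
    have hth := thresh n w (k := k+1) (by omega) (by omega) (c := 2*n+1 - jjf n w (n+1-i))
    have hidx2 : n+1-(k+1) = n-k := by omega
    rw [hidx2] at hth
    have := hth.mp (by omega)
    omega

include hw in
lemma lamcount (hn : 1 ≤ n) {k : ℕ} (hk1 : 1 ≤ k) (hkp : k ≤ pval n w) :
    ((Finset.Icc 1 n).filter (fun i => (k:ℤ) ≤ lamf n w i)).card + (n+1)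
      = jjf n w (n+1-k) + k := by
  classical
  have hple := p_le n w hw hn
  have ha := a_ge n w hw hn hk1 hkp
  have ha2 := a_le2n n w hn hk1 (by omega)
  have e1 : (Finset.Icc 1 n).filter (fun i => (k:ℤ) ≤ lamf n w i)
      = (Finset.Icc 1 n).filter (fun i => 2*n+1 ≤ jjf n w (n+1-i) + jjf n w (n+1-k)) := by
    apply Finset.filter_congr
    intro i hi
    simp only [Finset.mem_Icc] at hi
    exact lamf_iff n w hw hn hk1 hkp hi.1 hi.2
  have e2 : ((Finset.Icc 1 n).filter
        (fun i => 2*n+1 ≤ jjf n w (n+1-i) + jjf n w (n+1-k))).card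
      = ((Finset.Icc 1 n).filter
        (fun m => 2*n+1 ≤ jjf n w m + jjf n w (n+1-k))).card := by
    apply Finset.card_bij (fun i _ => n+1-i)
    · intro i hi
      simp only [Finset.mem_filter, Finset.mem_Icc] at hi ⊢
      exact ⟨⟨by omega, by omega⟩, hi.2⟩
    · intro i hi i' hi' hh
      simp only [Finset.mem_filter, Finset.mem_Icc] at hi hi'
      omega
    · intro m hm
      simp only [Finset.mem_filter, Finset.mem_Icc] at hm
      refine ⟨n+1-m, ?_, by omega⟩
      simp only [Finset.mem_filter, Finset.mem_Icc]
      have : n+1-(n+1-m) = m := by omega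
      rw [this]
      exact ⟨⟨by omega, by omega⟩, hm.2⟩
  have e3 : (Finset.Icc 1 n).filter (fun m => 2*n+1 ≤ jjf n w m + jjf n w (n+1-k))
      = (Finset.Icc 1 n).filter (fun m => 2*n+1 - jjf n w (n+1-k) ≤ jjf n w m) := by
    apply Finset.filter_congr
    intro m _
    constructor <;> intros <;> omega
  have e4 := countP_eq n w (fun t => 2*n+1 - jjf n w (n+1-k) ≤ t)
  have e5 := NN_refl n w hw hn hk1 hkp
  rw [e1, e2, e3, e4]
  rw [NN] at e5
  omega

include hw in
lemma lam_ge_p (hn : 1 ≤ n) {i : ℕ} (hi1 : 1 ≤ i) (hip : i ≤ pval n w) :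
    (pval n w : ℤ) ≤ lamf n w i := by
  have hple := p_le n w hw hn
  have ha := a_ge n w hw hn (k := pval n w) (by omega) le_rfl
  have hgap := jjf_gap n w (k := n+1-pval n w) (k' := n+1-i) (by omega) (by omega) (by omega)
  rw [lamf]
  split <;> omega

include hw in
lemma lam_p1 (hn : 1 ≤ n) (hp : 1 ≤ pval n w) :
    lamf n w (pval n w + 1) = (pval n w : ℤ) := by
  have hple := p_le n w hw hn
  have b1 : n ≤ jjf n w (n+1-(pval n w + 1)) := by
    refine (thresh n w (by omega) (by omega)).mpr ?_
    rw [NN_n n w hw hn, ← pval_eq]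
  have b2 : jjf n w (n+1-(pval n w + 1)) ≤ n+1 := by
    by_contra hcon
    push_neg at hcon
    have := (thresh n w (k := pval n w + 1) (by omega) (by omega) (c := n+2)).mp (by omega)
    rw [← pval_eq] at this
    omega
  rw [lamf]
  split <;> omega

include hw in
lemma mucount (hn : 1 ≤ n) {k : ℕ} (hk1 : 1 ≤ k) (hkp : k ≤ pval n w) :
    ((Finset.Icc 1 n).filter (fun i => (k:ℤ) ≤ muf n w i)).card + (n+2)
      = jjf n w (n+1-k) + k := by
  classical
  have hple := p_le n w hw hn
  have h8 := Finset.card_filter_add_card_filter_not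
    (s := (Finset.Icc 1 n).filter (fun i => (k:ℤ) ≤ muf n w i))
    (p := fun i => i ≤ pval n w)
  rw [Finset.filter_filter, Finset.filter_filter] at h8
  have e1 : (Finset.Icc 1 n).filter (fun i => (k:ℤ) ≤ muf n w i ∧ i ≤ pval n w)
      = Finset.Icc 1 (pval n w) := by
    ext i
    simp only [Finset.mem_filter, Finset.mem_Icc]
    constructor
    · rintro ⟨⟨h1, _⟩, _, h2⟩; exact ⟨h1, h2⟩
    · rintro ⟨h1, h2⟩
      refine ⟨⟨h1, by omega⟩, ?_, h2⟩
      rw [muf, if_pos h2]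
      have := lam_ge_p n w hw hn h1 h2
      omega
  have e2 : ((Finset.Icc 1 n).filter (fun i => (k:ℤ) ≤ muf n w i ∧ ¬ i ≤ pval n w)).card
      = ((Finset.Icc 1 n).filter (fun j => ((k:ℤ) ≤ lamf n w j) ∧ pval n w + 2 ≤ j)).card := by
    apply Finset.card_bij (fun i _ => i + 1)
    · intro i hi
      simp only [Finset.mem_filter, Finset.mem_Icc] at hi ⊢
      obtain ⟨⟨hi1, hi2⟩, hmu, hip⟩ := hi
      have hin : i + 1 ≤ n := by
        by_contra hcon
        rw [muf, if_neg hip, if_neg (by omega)] at hmu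
        omega
      rw [muf, if_neg hip, if_pos hin] at hmu
      exact ⟨⟨by omega, hin⟩, hmu, by omega⟩
    · intro i hi i' hi' hh
      omega
    · intro j hj
      simp only [Finset.mem_filter, Finset.mem_Icc] at hj
      obtain ⟨⟨hj1, hj2⟩, hlam, hjp⟩ := hj
      refine ⟨j - 1, ?_, by omega⟩
      simp only [Finset.mem_filter, Finset.mem_Icc]
      have hj1' : j - 1 + 1 = j := by omega
      refine ⟨⟨by omega, by omega⟩, ?_, by omega⟩
      rw [muf, if_neg (by omega), if_pos (by omega), hj1']
      exact hlam
  have h9 := Finset.card_filter_add_card_filter_not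
    (s := (Finset.Icc 1 n).filter (fun j => (k:ℤ) ≤ lamf n w j))
    (p := fun j => pval n w + 2 ≤ j)
  rw [Finset.filter_filter, Finset.filter_filter] at h9
  have e4 : (Finset.Icc 1 n).filter (fun j => ((k:ℤ) ≤ lamf n w j) ∧ ¬ (pval n w + 2 ≤ j))
      = Finset.Icc 1 (pval n w + 1) := by
    ext j
    simp only [Finset.mem_filter, Finset.mem_Icc]
    constructor
    · rintro ⟨⟨h1, _⟩, _, h2⟩; exact ⟨h1, by omega⟩
    · rintro ⟨h1, h2⟩
      refine ⟨⟨h1, by omega⟩, ?_, by omega⟩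
      rcases Nat.lt_or_ge j (pval n w + 1) with hcase | hcase
      · have := lam_ge_p n w hw hn h1 (by omega)
        omega
      · have hj : j = pval n w + 1 := by omega
        rw [hj, lam_p1 n w hw hn (by omega)]
        omega
  have hlc := lamcount n w hw hn hk1 hkp
  rw [e1] at h8
  rw [e2] at h8
  rw [e4] at h9
  rw [Nat.card_Icc] at h8 h9
  omega
end St11


theorem stmt11 (n : ℕ) (hn : 1 ≤ n) (w : Equiv.Perm (Fin (2*n)))
    (hw : Wcond n w) (hpar : Wpar n w) :
    (∀ k, 1 ≤ k → k ≤ pval n w → alphaf n w k = lamf n w k - (k:ℤ) + 1) ∧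
    (∀ k, 1 ≤ k → k ≤ pval n w →
      lamf n w k - (k:ℤ) = alphaf n w k - 1 ∧ lamconj n w k - (k:ℤ) = alphaf n w k) ∧
    (∀ k, 1 ≤ k → k ≤ pval n w →
      muf n w k - (k:ℤ) = alphaf n w k ∧ muconj n w k - (k:ℤ) = alphaf n w k - 1) := by
  have hple := St11.p_le n w hw hn
  have part1 : ∀ k, 1 ≤ k → k ≤ pval n w → alphaf n w k = lamf n w k - (k:ℤ) + 1 := by
    intro k hk1 hkp
    have ha := St11.a_ge n w hw hn hk1 hkp
    rw [alphaf, lamf, if_neg (by omega)]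
    have hkn : k ≤ n := by omega
    omega
  refine ⟨part1, fun k hk1 hkp => ⟨by have := part1 k hk1 hkp; omega, ?_⟩,
    fun k hk1 hkp => ⟨?_, ?_⟩⟩
  · have hlc := St11.lamcount n w hw hn hk1 hkp
    rw [lamconj, alphaf]
    omega
  · rw [muf, if_pos hkp]
    have := part1 k hk1 hkp
    omega
  · have hmc := St11.mucount n w hw hn hk1 hkp
    rw [muconj, alphaf]
    omega
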